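/- Let m ≥ 2 be an integer, let B ⊆ mℤ be an infinite set of integers divisible by m, let f̃ be an integer with 1 ≤ f̃ ≤ m − 1, and let F be a finite nonempty set of integers each congruent to f̃ modulo m. Suppose there exist sets S₁, …, Sₙ ⊆ ℤ with S₁ ∪ ⋯ ∪ Sₙ = mℕ ∪ B such that for each i there exists Wᵢ ⊆ ℤ with F + Wᵢ = mℤ \ Sᵢ. If m ≥ f̃ + 2f̃·⌊(n+1)/f̃⌋ + ((n+1) mod f̃), then the set C = mℕ ∪ B ∪ F arises as a minimal additive complement in ℤ. -/

import Mathlib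

open Pointwise

/-- `C` is a minimal additive complement to `W` in `ℤ`. -/
def IsMAC (C W : Set ℤ) : Prop :=
  C + W = Set.univ ∧ ∀ C' : Set ℤ, C' ⊂ C → C' + W ≠ Set.univ

/-- `C` arises as a minimal additive complement in `ℤ`. -/
def ArisesAsMAC (C : Set ℤ) : Prop :=
  ∃ W : Set ℤ, IsMAC C W

namespace MacAux

lemma mem_add'' {A B : Set ℤ} {x : ℤ} : x ∈ A + B ↔ ∃ a ∈ A, ∃ b ∈ B, a + b = x :=
  Set.mem_add

lemma emod_sub_zero {m a c : ℤ} (hc : c % m = 0) : (a - c) % m = a % m := by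
  conv_lhs => rw [Int.sub_emod, hc]
  simp [Int.emod_emod_of_dvd]

lemma emod_add_self_right {m a c : ℤ} (hc : c % m = 0) : (a + c) % m = a % m := by
  conv_lhs => rw [Int.add_emod, hc]
  simp [Int.emod_emod_of_dvd]

lemma emod_sub_f {m a c f : ℤ} (hc : c % m = f) : (a - c) % m = (a % m - f) % m := by
  conv_lhs => rw [Int.sub_emod, hc]

lemma emod_eq_self {m a : ℤ} (h0 : 0 ≤ a) (h1 : a < m) : a % m = a :=
  Int.emod_eq_of_lt h0 h1

section Master

variable {ι : Type}

/-- The complement set built from slot data. -/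
def mW (m : ℤ) (ρ κ : ι → ℤ) (CI : ι → Prop) (t : ι → ℤ) (V : ι → Set ℤ)
    (gκ gρ : ℤ) (GP : Set ℤ) : Set ℤ :=
  {x | ¬ ((∃ s, x % m = ρ s) ∨ (∃ s, CI s ∧ x % m = κ s) ∨ x % m = gκ ∨ x % m = gρ)}
    ∪ GP ∪ (⋃ s, insert (t s) (V s))

lemma t_mem_mW (m : ℤ) (ρ κ : ι → ℤ) (CI : ι → Prop) (t : ι → ℤ) (V : ι → Set ℤ)
    (gκ gρ : ℤ) (GP : Set ℤ) (s : ι) : t s ∈ mW m ρ κ CI t V gκ gρ GP := by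
  refine Or.inr (Set.mem_iUnion.2 ⟨s, ?_⟩); exact Set.mem_insert _ _

lemma V_subset_mW (m : ℤ) (ρ κ : ι → ℤ) (CI : ι → Prop) (t : ι → ℤ) (V : ι → Set ℤ)
    (gκ gρ : ℤ) (GP : Set ℤ) (s : ι) : V s ⊆ mW m ρ κ CI t V gκ gρ GP := by
  intro v hv
  refine Or.inr (Set.mem_iUnion.2 ⟨s, ?_⟩); exact Set.mem_insert_of_mem _ hv

lemma GP_subset_mW (m : ℤ) (ρ κ : ι → ℤ) (CI : ι → Prop) (t : ι → ℤ) (V : ι → Set ℤ)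
    (gκ gρ : ℤ) (GP : Set ℤ) : GP ⊆ mW m ρ κ CI t V gκ gρ GP := by
  intro v hv; exact Or.inl (Or.inr hv)

lemma master
    (m f : ℤ) (hm : 0 < m) (hf0 : 0 < f) (hfm : f < m)
    (C₀ F : Set ℤ)
    (h0 : ∀ k : ℕ, (m * k : ℤ) ∈ C₀)
    (hC₀r : ∀ c ∈ C₀, c % m = 0)
    (hFr : ∀ x ∈ F, x % m = f)
    (ρ κ t : ι → ℤ) (V P : ι → Set ℤ) (CI : ι → Prop)
    (gκ gρ : ℤ) (GP : Set ℤ)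
    (hρb : ∀ s, 0 ≤ ρ s ∧ ρ s < m)
    (hρκ : ∀ s, CI s → (ρ s - f) % m = κ s)
    (hρinj : ∀ s s', ρ s = ρ s' → s = s')
    (hκinj : ∀ s s', CI s → CI s' → κ s = κ s' → s = s')
    (hρκd : ∀ s s', CI s' → ρ s ≠ κ s')
    (hρg : ∀ s, ρ s ≠ gκ ∧ ρ s ≠ gρ)
    (hκg : ∀ s, CI s → κ s ≠ gκ ∧ κ s ≠ gρ)
    (hgg : gκ ≠ gρ)
    (hgρκ : (gρ - f) % m = gκ)
    (htr : ∀ s, t s % m = ρ s)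
    (hVr : ∀ s, ∀ v ∈ V s, v % m = κ s ∧ CI s)
    (h5 : ∀ s, ∀ fe ∈ F, ∀ v ∈ V s, ∀ c ∈ P s, fe + v ≠ c + t s)
    (hprot : ∀ s, ¬ CI s → ∃ s', ρ s' = (ρ s - f) % m ∧
        ∀ c ∈ P s, ∀ fe ∈ F, c + t s ≠ fe + t s')
    (h6 : ∀ s, ∀ z, z % m = ρ s → (z - t s ∈ C₀ ∨ ∃ fe ∈ F, z - fe ∈ V s))
    (h7 : ∀ s, CI s → ∀ z, z % m = κ s →
        ∃ c ∈ C₀ ∪ F, z - c ∈ mW m ρ κ CI t V gκ gρ GP)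
    (h8 : ∀ c ∈ C₀, ∃ s, c ∈ P s)
    (hGPr : ∀ v ∈ GP, v % m = gκ)
    (hg6 : ∀ z, z % m = gρ → ∃ fe ∈ F, z - fe ∈ GP)
    (hg7 : ∀ z, z % m = gκ → ∃ c ∈ C₀ ∪ F, z - c ∈ mW m ρ κ CI t V gκ gρ GP)
    (hgw : ∀ fe ∈ F, ∃ x, x % m = gρ ∧ x - fe ∈ GP ∧
        ∀ fe' ∈ F, fe' ≠ fe → x - fe' ∉ GP) :
    IsMAC (C₀ ∪ F) (mW m ρ κ CI t V gκ gρ GP) := by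
  classical
  set W := mW m ρ κ CI t V gκ gρ GP with hWdef
  have hidρ : ∀ w ∈ W, ∀ s, w % m = ρ s → w = t s := by
    intro w hw s hres
    rcases hw with ((hfull | hGP) | hU)
    · exact absurd (Or.inl ⟨s, hres⟩) hfull
    · exact absurd (hres.symm.trans (hGPr w hGP)) (hρg s).1
    · rcases Set.mem_iUnion.1 hU with ⟨s', hs'⟩
      rcases Set.mem_insert_iff.1 hs' with h | h
      · have h1 : ρ s' = ρ s := by rw [← htr s', ← h]; exact hres
        rw [h, hρinj s' s h1]
      · have hv := hVr s' w h
        exact absurd (hres.symm.trans hv.1) (hρκd s s' hv.2)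
  have hidκ : ∀ w ∈ W, ∀ s, CI s → w % m = κ s → w ∈ V s := by
    intro w hw s hCIs hres
    rcases hw with ((hfull | hGP) | hU)
    · exact absurd (Or.inr (Or.inl ⟨s, hCIs, hres⟩)) hfull
    · exact absurd (hres.symm.trans (hGPr w hGP)) (hκg s hCIs).1
    · rcases Set.mem_iUnion.1 hU with ⟨s', hs'⟩
      rcases Set.mem_insert_iff.1 hs' with h | h
      · have h1 : ρ s' = κ s := by rw [← htr s', ← h]; exact hres
        exact absurd h1 (hρκd s' s hCIs)
      · have hv := hVr s' w h
        have h1 : κ s' = κ s := hv.1.symm.trans hres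
        rwa [hκinj s' s hv.2 hCIs h1] at h
  have hidgρ : ∀ w ∈ W, w % m ≠ gρ := by
    intro w hw hres
    rcases hw with ((hfull | hGP) | hU)
    · exact hfull (Or.inr (Or.inr (Or.inr hres)))
    · exact hgg ((hGPr w hGP).symm.trans hres)
    · rcases Set.mem_iUnion.1 hU with ⟨s', hs'⟩
      rcases Set.mem_insert_iff.1 hs' with h | h
      · exact (hρg s').2 (by rw [← htr s', ← h]; exact hres)
      · have hv := hVr s' w h
        exact (hκg s' hv.2).2 (hv.1.symm.trans hres)
  have hidgκ : ∀ w ∈ W, w % m = gκ → w ∈ GP := by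
    intro w hw hres
    rcases hw with ((hfull | hGP) | hU)
    · exact absurd (Or.inr (Or.inr (Or.inl hres))) hfull
    · exact hGP
    · rcases Set.mem_iUnion.1 hU with ⟨s', hs'⟩
      rcases Set.mem_insert_iff.1 hs' with h | h
      · exact absurd (by rw [← htr s', ← h]; exact hres : ρ s' = gκ).symm
          (Ne.symm (hρg s').1)
      · have hv := hVr s' w h
        exact absurd (hv.1.symm.trans hres) (hκg s' hv.2).1
  constructor
  · rw [Set.eq_univ_iff_forall]
    intro z
    rw [mem_add'']
    by_cases h1 : ∃ s, z % m = ρ s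
    · obtain ⟨s, hs⟩ := h1
      rcases h6 s z hs with hc | ⟨fe, hfe, hv⟩
      · exact ⟨z - t s, Or.inl hc, t s, t_mem_mW m ρ κ CI t V gκ gρ GP s, by ring⟩
      · exact ⟨fe, Or.inr hfe, z - fe, V_subset_mW m ρ κ CI t V gκ gρ GP s hv, by ring⟩
    by_cases h2 : ∃ s, CI s ∧ z % m = κ s
    · obtain ⟨s, hCIs, hs⟩ := h2
      obtain ⟨c, hc, hw⟩ := h7 s hCIs z hs
      exact ⟨c, hc, z - c, hw, by ring⟩
    by_cases h3 : z % m = gκ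
    · obtain ⟨c, hc, hw⟩ := hg7 z h3
      exact ⟨c, hc, z - c, hw, by ring⟩
    by_cases h4 : z % m = gρ
    · obtain ⟨fe, hfe, hw⟩ := hg6 z h4
      exact ⟨fe, Or.inr hfe, z - fe, GP_subset_mW m ρ κ CI t V gκ gρ GP hw, by ring⟩
    · refine ⟨(m * (0:ℕ) : ℤ), Or.inl (h0 0), z, Or.inl (Or.inl ?_), by push_cast; ring⟩
      intro hcon
      rcases hcon with h | h | h | h
      exacts [h1 h, h2 h, h3 h, h4 h]
  · intro C' hC' heq
    obtain ⟨c₀, hc₀C, hc₀C'⟩ := Set.exists_of_ssubset hC'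
    have hsub := hC'.subset
    rcases hc₀C with hc₀ | hc₀
    · obtain ⟨s, hPs⟩ := h8 c₀ hc₀
      have hx : c₀ + t s ∈ C' + W := heq ▸ Set.mem_univ _
      rw [mem_add''] at hx
      obtain ⟨c', hc', w', hw', hsum⟩ := hx
      have hxres : (c₀ + t s) % m = ρ s := by
        rw [add_comm, emod_add_self_right (hC₀r c₀ hc₀), htr]
      rcases hsub hc' with hcC₀ | hcF
      · have hres : w' % m = ρ s := by
          rw [show w' = (c₀ + t s) - c' by linarith,
            emod_sub_zero (hC₀r c' hcC₀), hxres]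
        have hw2 := hidρ w' hw' s hres
        have : c' = c₀ := by omega
        exact hc₀C' (this ▸ hc')
      · have hres : w' % m = (ρ s - f) % m := by
          rw [show w' = (c₀ + t s) - c' by linarith,
            emod_sub_f (hFr c' hcF), hxres]
        by_cases hCI : CI s
        · rw [hρκ s hCI] at hres
          have hw2 := hidκ w' hw' s hCI hres
          exact h5 s c' hcF w' hw2 c₀ hPs (by linarith)
        · obtain ⟨s', hρ', hineq⟩ := hprot s hCI
          have hres' : w' % m = ρ s' := by rw [hres, hρ']
          have hw2 := hidρ w' hw' s' hres'
          exact hineq c₀ hPs c' hcF (by omega)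
    · obtain ⟨x, hxres, hxGP, huniq⟩ := hgw c₀ hc₀
      have hx : x ∈ C' + W := heq ▸ Set.mem_univ _
      rw [mem_add''] at hx
      obtain ⟨c', hc', w', hw', hsum⟩ := hx
      rcases hsub hc' with hcC₀ | hcF
      · have hres : w' % m = gρ := by
          rw [show w' = x - c' by linarith, emod_sub_zero (hC₀r c' hcC₀), hxres]
        exact hidgρ w' hw' hres
      · have hres : w' % m = gκ := by
          rw [show w' = x - c' by linarith, emod_sub_f (hFr c' hcF), hxres, hgρκ]
        have hwGP := hidgκ w' hw' hres
        by_cases hc'e : c' = c₀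
        · exact hc₀C' (hc'e ▸ hc')
        · exact huniq c' hcF hc'e (by rw [show x - c' = w' by linarith]; exact hwGP)


end Master


lemma emod_sub_zero' {m a c : ℤ} (hc : c % m = 0) : (a - c) % m = a % m := by
  conv_lhs => rw [Int.sub_emod, hc]
  simp [Int.emod_emod_of_dvd]

lemma emod_sub_f' {m a c f : ℤ} (hc : c % m = f) : (a - c) % m = (a % m - f) % m := by
  conv_lhs => rw [Int.sub_emod, hc]

lemma eq_zero_of_mul_small {M x y : ℤ} (hM : 0 < M) (h : M * x = y)
    (hy : -M < y) (hy' : y < M) : x = 0 := by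
  rcases lt_trichotomy x 0 with h1 | h1 | h1
  · nlinarith
  · exact h1
  · nlinarith

lemma gadget (m f : ℤ) (hm : 0 < m) (hf : 0 ≤ f ∧ f < m)
    (F : Set ℤ) (hFfin : F.Finite) (hFne : F.Nonempty)
    (hFr : ∀ x ∈ F, x % m = f)
    (gκ gρ : ℤ) (hgρκ : (gρ - f) % m = gκ) (hgρb : 0 ≤ gρ ∧ gρ < m) :
    ∃ GP : Set ℤ,
      (∀ v ∈ GP, v % m = gκ) ∧
      (∀ z, z % m = gρ → ∃ fe ∈ F, z - fe ∈ GP) ∧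
      (∀ z, z % m = gκ → ∃ k : ℕ, z - m * k ∈ GP) ∧
      (∀ fe ∈ F, ∃ x, x % m = gρ ∧ x - fe ∈ GP ∧
        ∀ fe' ∈ F, fe' ≠ fe → x - fe' ∉ GP) := by
  classical
  have hmne : m ≠ 0 := ne_of_gt hm
  have hFsne : hFfin.toFinset.Nonempty := by
    rwa [Set.Finite.toFinset_nonempty]
  set e : ℤ → ℤ := fun x => (x - f) / m with he
  have hekey : ∀ x ∈ F, m * e x = x - f := by
    intro x hx
    refine Int.mul_ediv_cancel' (Int.dvd_of_emod_eq_zero ?_)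
    rw [Int.sub_emod, hFr x hx, Int.emod_eq_of_lt hf.1 hf.2, sub_self, Int.zero_emod]
  have heinj : ∀ x ∈ F, ∀ y ∈ F, e x = e y → x = y := by
    intro x hx y hy hxy
    have h1 := hekey x hx
    have h2 := hekey y hy
    rw [hxy] at h1; omega
  have hEsne : (hFfin.toFinset.image e).Nonempty := hFsne.image e
  set lo := (hFfin.toFinset.image e).min' hEsne with hlo
  set hi := (hFfin.toFinset.image e).max' hEsne with hhi
  have hbd : ∀ x ∈ F, lo ≤ e x ∧ e x ≤ hi := by
    intro x hx
    have hmem : e x ∈ hFfin.toFinset.image e :=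
      Finset.mem_image_of_mem e (hFfin.mem_toFinset.2 hx)
    exact ⟨Finset.min'_le _ _ hmem, Finset.le_max' _ _ hmem⟩
  have hD : 0 ≤ hi - lo := by
    obtain ⟨x, hx⟩ := hFne
    have := hbd x hx; omega
  set M : ℤ := 2 * (hi - lo) + 1 with hM
  have hM0 : 0 < M := by omega
  set xw : ℤ → ℤ := fun fe => gρ + m * (M * e fe) with hxw
  have hxa : ∀ a, xw a = gρ + m * (M * e a) := fun a => rfl
  set H : Set ℤ := {h | ∃ a ∈ F, ∃ b ∈ F, b ≠ a ∧ h = xw a - b} with hH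
  set GP : Set ℤ := {v | v % m = gκ ∧ v ∉ H} with hGP
  have hxwres : ∀ fe, xw fe % m = gρ := by
    intro fe
    rw [hxa, Int.add_mul_emod_self_left]
    exact Int.emod_eq_of_lt hgρb.1 hgρb.2
  have hkey : ∀ z, z % m = gρ → ∀ fe ∈ F, ∀ a ∈ F, ∀ b ∈ F,
      z - fe = xw a - b → (z - gρ) / m - M * e a = e fe - e b := by
    intro z hz fe hfe a ha b hb heq
    have hζ : m * ((z - gρ) / m) = z - gρ := by
      refine Int.mul_ediv_cancel' (Int.dvd_of_emod_eq_zero ?_)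
      rw [Int.sub_emod, hz, Int.emod_eq_of_lt hgρb.1 hgρb.2, sub_self, Int.zero_emod]
    have h1 := hekey fe hfe
    have h2 := hekey b hb
    rw [hxa] at heq
    have hmul : m * ((z - gρ) / m - M * e a) = m * (e fe - e b) := by
      rw [mul_sub, mul_sub, hζ]; linarith
    exact mul_left_cancel₀ hmne hmul
  refine ⟨GP, ?_, ?_, ?_, ?_⟩
  · intro v hv; exact hv.1
  · -- coverage of the gρ class
    intro z hz
    by_contra hcon
    push_neg at hcon
    have hall : ∀ fe ∈ F, z - fe ∈ H := by
      intro fe hfe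
      have hres : (z - fe) % m = gκ := by
        rw [emod_sub_f' (hFr fe hfe), hz, hgρκ]
      by_contra hH'
      exact hcon fe hfe ⟨hres, hH'⟩
    obtain ⟨flo, hflomem, hfloe⟩ : ∃ x ∈ F, e x = lo := by
      have h1 : lo ∈ hFfin.toFinset.image e := Finset.min'_mem _ _
      obtain ⟨x, hx, hxe⟩ := Finset.mem_image.1 h1
      exact ⟨x, hFfin.mem_toFinset.1 hx, hxe⟩
    obtain ⟨fhi, hfhimem, hfhie⟩ : ∃ x ∈ F, e x = hi := by
      have h1 : hi ∈ hFfin.toFinset.image e := Finset.max'_mem _ _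
      obtain ⟨x, hx, hxe⟩ := Finset.mem_image.1 h1
      exact ⟨x, hFfin.mem_toFinset.1 hx, hxe⟩
    obtain ⟨a1, ha1, b1, hb1, hne1, heq1⟩ := hall flo hflomem
    obtain ⟨a2, ha2, b2, hb2, hne2, heq2⟩ := hall fhi hfhimem
    have k1 := hkey z hz flo hflomem a1 ha1 b1 hb1 heq1
    have k2 := hkey z hz fhi hfhimem a2 ha2 b2 hb2 heq2
    rw [hfloe] at k1
    rw [hfhie] at k2
    obtain ⟨hb1l, hb1h⟩ := hbd b1 hb1
    obtain ⟨hb2l, hb2h⟩ := hbd b2 hb2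
    have hea : e a2 - e a1 = 0 := by
      refine eq_zero_of_mul_small hM0 (y := (lo - e b1) - (hi - e b2)) (by linarith)
        (by omega) (by omega)
    have hle0 : (z - gρ) / m - M * e a1 ≤ 0 := by
      rw [k1]; omega
    have hge0 : 0 ≤ (z - gρ) / m - M * e a1 := by
      have : M * e a1 = M * e a2 := by
        have : e a1 = e a2 := by omega
        rw [this]
      rw [this, k2]; omega
    have hc0 : (z - gρ) / m - M * e a1 = 0 := le_antisymm hle0 hge0
    obtain ⟨a3, ha3, b3, hb3, hne3, heq3⟩ := hall a1 ha1
    have k3 := hkey z hz a1 ha1 a3 ha3 b3 hb3 heq3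
    obtain ⟨ha3l, ha3h⟩ := hbd a3 ha3
    obtain ⟨ha1l, ha1h⟩ := hbd a1 ha1
    obtain ⟨hb3l, hb3h⟩ := hbd b3 hb3
    have k3' : M * (e a1 - e a3) = e a1 - e b3 := by
      have : M * e a1 - M * e a3 = e a1 - e b3 := by linarith
      linarith [this, mul_sub M (e a1) (e a3)]
    have hea3 : e a1 - e a3 = 0 :=
      eq_zero_of_mul_small hM0 k3' (by omega) (by omega)
    have heb3 : e b3 = e a1 := by
      have := k3'
      rw [hea3, mul_zero] at this
      omega
    have hb3a1 : b3 = a1 := heinj b3 hb3 a1 ha1 heb3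
    have ha3a1 : a3 = a1 := heinj a3 ha3 a1 ha1 (by omega)
    exact hne3 (hb3a1.trans ha3a1.symm)
  · -- coverage of the gκ class
    intro z hz
    have hHbd : ∀ h ∈ H, gρ - f + m * (M * lo - hi) ≤ h := by
      rintro h ⟨a, ha, b, hb, hne, rfl⟩
      obtain ⟨hal, hah⟩ := hbd a ha
      obtain ⟨hbl, hbh⟩ := hbd b hb
      have h2 := hekey b hb
      have hmono : m * (M * lo - hi) ≤ m * (M * e a - e b) := by
        refine mul_le_mul_of_nonneg_left ?_ (le_of_lt hm)
        have : M * lo ≤ M * e a := mul_le_mul_of_nonneg_left hal (le_of_lt hM0)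
        omega
      rw [hxa]
      linarith
    refine ⟨(z - (gρ - f + m * (M * lo - hi)) + 1).toNat, ⟨?_, ?_⟩⟩
    · rw [emod_sub_zero' (by simp [Int.mul_emod_right])]
      exact hz
    · intro hmem
      have hb := hHbd _ hmem
      have h2 : ((z - (gρ - f + m * (M * lo - hi)) + 1).toNat : ℤ)
          ≥ z - (gρ - f + m * (M * lo - hi)) + 1 := Int.self_le_toNat _
      have h1 : ((z - (gρ - f + m * (M * lo - hi)) + 1).toNat : ℤ)
          ≤ m * ((z - (gρ - f + m * (M * lo - hi)) + 1).toNat : ℤ) :=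
        le_mul_of_one_le_left (Int.natCast_nonneg _) hm
      omega
  · -- witnesses
    intro fe hfe
    refine ⟨xw fe, hxwres fe, ⟨?_, ?_⟩, ?_⟩
    · rw [emod_sub_f' (hFr fe hfe), hxwres, hgρκ]
    · rintro ⟨a, ha, b, hb, hne, heq⟩
      have k := hkey (xw fe) (hxwres fe) fe hfe a ha b hb heq
      have hζ : (xw fe - gρ) / m = M * e fe := by
        have h3 : xw fe - gρ = m * (M * e fe) := by rw [hxa]; ring
        rw [h3, Int.mul_ediv_cancel_left _ hmne]
      rw [hζ] at k
      obtain ⟨hal, hah⟩ := hbd a ha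
      obtain ⟨hbl, hbh⟩ := hbd b hb
      obtain ⟨hfl, hfh⟩ := hbd fe hfe
      have k' : M * (e fe - e a) = e fe - e b := by
        have h4 := mul_sub M (e fe) (e a)
        linarith
      have hea : e fe - e a = 0 :=
        eq_zero_of_mul_small hM0 k' (by omega) (by omega)
      have heb : e b = e fe := by
        rw [hea, mul_zero] at k'
        omega
      have hb' : b = fe := heinj b hb fe hfe heb
      have ha' : a = fe := heinj a ha fe hfe (by omega)
      exact hne (hb'.trans ha'.symm)
    · rintro fe' hfe' hnefe ⟨hres, hnotH⟩
      exact hnotH ⟨fe, hfe, fe', hfe', hnefe, rfl⟩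


/-- block layout: position `k` gets carrier residue `bk f k` and witness residue `bk f k + f`. -/
def bk (f k : ℤ) : ℤ := 2 * f * (k / f) + k % f

lemma bk_decode (f : ℤ) (hf : 0 < f) (k : ℤ) (hk : 0 ≤ k) :
    bk f k % (2 * f) = k % f ∧ bk f k / (2 * f) = k / f := by
  have h2f : (2 * f) ≠ 0 := by positivity
  have hb0 : 0 ≤ k % f := Int.emod_nonneg k (ne_of_gt hf)
  have hbf : k % f < f := Int.emod_lt_of_pos k hf
  have hrw : bk f k = k % f + (k / f) * (2 * f) := by unfold bk; ring
  constructor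
  · rw [hrw, Int.add_mul_emod_self_right]
    exact Int.emod_eq_of_lt hb0 (by linarith)
  · rw [hrw, Int.add_mul_ediv_right _ _ h2f,
      Int.ediv_eq_zero_of_lt hb0 (by linarith), zero_add]

lemma bkf_decode (f : ℤ) (hf : 0 < f) (k : ℤ) (hk : 0 ≤ k) :
    (bk f k + f) % (2 * f) = k % f + f ∧ (bk f k + f) / (2 * f) = k / f := by
  have h2f : (2 * f) ≠ 0 := by positivity
  have hb0 : 0 ≤ k % f := Int.emod_nonneg k (ne_of_gt hf)
  have hbf : k % f < f := Int.emod_lt_of_pos k hf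
  have hrw : bk f k + f = (k % f + f) + (k / f) * (2 * f) := by unfold bk; ring
  constructor
  · rw [hrw, Int.add_mul_emod_self_right]
    exact Int.emod_eq_of_lt (by linarith) (by linarith)
  · rw [hrw, Int.add_mul_ediv_right _ _ h2f,
      Int.ediv_eq_zero_of_lt (by linarith) (by linarith), zero_add]

lemma bk_inj (f : ℤ) (hf : 0 < f) {k k' : ℤ} (hk : 0 ≤ k) (hk' : 0 ≤ k')
    (h : bk f k = bk f k') : k = k' := by
  have d1 := bk_decode f hf k hk
  have d2 := bk_decode f hf k' hk'
  rw [h] at d1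
  have hmod : k % f = k' % f := by rw [← d1.1, d2.1]
  have hdiv : k / f = k' / f := by rw [← d1.2, d2.2]
  have e1 := Int.mul_ediv_add_emod k f
  have e2 := Int.mul_ediv_add_emod k' f
  rw [hmod, hdiv] at e1
  omega

lemma bkf_inj (f : ℤ) (hf : 0 < f) {k k' : ℤ} (hk : 0 ≤ k) (hk' : 0 ≤ k')
    (h : bk f k + f = bk f k' + f) : k = k' :=
  bk_inj f hf hk hk' (by omega)

lemma bk_ne_bkf (f : ℤ) (hf : 0 < f) {k k' : ℤ} (hk : 0 ≤ k) (hk' : 0 ≤ k') :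
    bk f k ≠ bk f k' + f := by
  intro h
  have d1 := bk_decode f hf k hk
  have d2 := bkf_decode f hf k' hk'
  have hb0 : 0 ≤ k' % f := Int.emod_nonneg k' (ne_of_gt hf)
  have hbf : k % f < f := Int.emod_lt_of_pos k hf
  rw [h] at d1
  omega

lemma bk_nonneg (f : ℤ) (hf : 0 < f) (k : ℤ) (hk : 0 ≤ k) : 0 ≤ bk f k := by
  have hb0 : 0 ≤ k % f := Int.emod_nonneg k (ne_of_gt hf)
  have ha0 : 0 ≤ k / f := Int.ediv_nonneg hk (le_of_lt hf)
  have : 0 ≤ 2 * f * (k / f) := by positivity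
  unfold bk; linarith

lemma bk_le_q (f d : ℤ) (hf : 0 < f) {k : ℤ} (hk : 0 ≤ k) (hkd : k < d) :
    k / f ≤ d / f := Int.ediv_le_ediv hf (by omega)

/-- bound: witness residue of any position fits below L, with the dichotomy
needed for the lambda argument. -/
lemma bk_bound (f d : ℤ) (hf : 0 < f) {k : ℤ} (hk : 0 ≤ k) (hkd : k < d) :
    bk f k + f ≤ f + 2 * f * (d / f) + d % f - 1 ∧
    (bk f k + f < 2 * f * (d / f) + d % f ∨ f + 2 * f * (d / f) ≤ bk f k + f) := by
  have hb0 : 0 ≤ k % f := Int.emod_nonneg k (ne_of_gt hf)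
  have hbf : k % f < f := Int.emod_lt_of_pos k hf
  have hr0 : 0 ≤ d % f := Int.emod_nonneg d (ne_of_gt hf)
  have hrf : d % f < f := Int.emod_lt_of_pos d hf
  have ek : f * (k / f) + k % f = k := Int.mul_ediv_add_emod k f
  have ed : f * (d / f) + d % f = d := Int.mul_ediv_add_emod d f
  have haq : k / f ≤ d / f := bk_le_q f d hf hk hkd
  have hbk : bk f k = 2 * (f * (k / f)) + k % f := by unfold bk; ring
  rcases eq_or_lt_of_le haq with heq | hlt
  · -- a = q
    rw [heq] at hbk ek
    constructor
    · rw [hbk]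
      have : 2 * f * (d / f) = 2 * (f * (d / f)) := by ring
      omega
    · right
      have : 2 * f * (d / f) = 2 * (f * (d / f)) := by ring
      omega
  · -- a < q
    have hmul : f * (k / f + 1) ≤ f * (d / f) :=
      mul_le_mul_of_nonneg_left (by omega) (le_of_lt hf)
    have hmul' : f * (k / f + 1) = f * (k / f) + f := by ring
    constructor
    · rw [hbk]
      have : 2 * f * (d / f) = 2 * (f * (d / f)) := by ring
      omega
    · left
      rw [hbk]
      have : 2 * f * (d / f) = 2 * (f * (d / f)) := by ring
      omega

/-- the lambda position for the assisted slot. -/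
lemma lambda_exists (f d m : ℤ) (hf : 0 < f) (hd : 0 < d) (hfm : f ≤ m - 1)
    (hL : f + 2 * f * (d / f) + d % f ≤ m) (hm2f : m ≠ 2 * f) :
    ∃ kd, 0 ≤ kd ∧ kd < d ∧ kd < f ∧
      (bk f kd - f) % m = m - f + kd ∧
      ∀ k, 0 ≤ k → k < d →
        (m - f + kd ≠ bk f k ∧ m - f + kd ≠ bk f k + f) := by
  have hr0 : 0 ≤ d % f := Int.emod_nonneg d (ne_of_gt hf)
  have hrf : d % f < f := Int.emod_lt_of_pos d hf
  have hq0 : 0 ≤ d / f := Int.ediv_nonneg (le_of_lt hd) (le_of_lt hf)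
  have ed : f * (d / f) + d % f = d := Int.mul_ediv_add_emod d f
  have hbr1 : 2 * f * (d / f) = 2 * (f * (d / f)) := by ring
  have hq2 : 0 ≤ f * (d / f) := by positivity
  have hbex : ∃ b, 0 ≤ b ∧ b < d ∧ b < f ∧
      (m - f + b < 2 * f * (d / f) + d % f ∨
        (2 * f * (d / f) + d % f ≤ m - f + b ∧
          m - f + b < f + 2 * f * (d / f)) ∨
        f + 2 * f * (d / f) + d % f ≤ m - f + b) := by
    by_cases h1 : f + 2 * f * (d / f) + d % f ≤ m - f
    · exact ⟨0, le_refl 0, hd, hf, by right; right; omega⟩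
    · by_cases h2 : m - f < f + 2 * f * (d / f)
      · refine ⟨0, le_refl 0, hd, hf, ?_⟩
        by_cases h3 : m - f < 2 * f * (d / f) + d % f
        · left; omega
        · right; left; omega
      · -- m - f ∈ [L - r, L) : take b := L + f - m
        refine ⟨f + 2 * f * (d / f) + d % f + f - m, by omega, ?_, by omega,
          by right; right; omega⟩
        by_cases hq1 : 1 ≤ d / f
        · have : f * 1 ≤ f * (d / f) := mul_le_mul_of_nonneg_left hq1 (le_of_lt hf)
          omega
        · have hq0' : d / f = 0 := by omega
          have hz : f * (d / f) = 0 := by rw [hq0']; ring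
          have hz2 : 2 * f * (d / f) = 0 := by rw [hq0']; ring
          omega
  obtain ⟨b, hb0, hbd, hbf, hcase⟩ := hbex
  have hbkb : bk f b = b := by
    unfold bk
    rw [Int.ediv_eq_zero_of_lt hb0 hbf, Int.emod_eq_of_lt hb0 hbf]
    ring
  refine ⟨b, hb0, hbd, hbf, ?_, ?_⟩
  · rw [hbkb]
    have h1 : (b - f) % m = (b - f + m * 1) % m := (Int.add_mul_emod_self_left _ _ _).symm
    have h2 : b - f + m * 1 = m - f + b := by ring
    rw [h1, h2, Int.emod_eq_of_lt (by omega) (by omega)]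
  · intro k hk0 hkd
    have hbnd := bk_bound f d hf hk0 hkd
    have h1 := hbnd.1
    have h2 := hbnd.2
    constructor
    · omega
    · rcases hcase with hc | hc | hc
      · omega
      · omega
      · omega

section Toolkit
variable {m ft : ℤ}

lemma res_add {a b x y : ℤ} (ha : a % m = x) (hb : b % m = y) :
    (a + b) % m = (x + y) % m := by rw [Int.add_emod, ha, hb]

lemma neg_ft_emod (hm : 0 < m) (hf1 : 1 ≤ ft) (hf2 : ft ≤ m - 1) :
    (-ft) % m = m - ft := by
  have h1 : (-ft) % m = (-ft + m * 1) % m := (Int.add_mul_emod_self_left _ _ _).symm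
  have h2 : -ft + m * 1 = m - ft := by ring
  rw [h1, h2, Int.emod_eq_of_lt (by omega) (by omega)]

lemma W_res (hm : 0 < m) (hf1 : 1 ≤ ft) (hf2 : ft ≤ m - 1)
    {F Sj Wj : Set ℤ} (hWj : F + Wj = {x : ℤ | m ∣ x} \ Sj)
    (hFne : F.Nonempty) (hFr : ∀ x ∈ F, x % m = ft) :
    ∀ w ∈ Wj, w % m = m - ft := by
  intro w hw
  obtain ⟨fe, hfe⟩ := hFne
  have hmem : fe + w ∈ F + Wj := Set.add_mem_add hfe hw
  rw [hWj] at hmem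
  have hdvd : m ∣ fe + w := hmem.1
  have h0 : (fe + w) % m = 0 := Int.emod_eq_zero_of_dvd hdvd
  have h1 : w % m = ((fe + w) - fe) % m := by norm_num
  rw [h1, emod_sub_f' (hFr fe hfe), h0]
  have h2 : (0:ℤ) - ft = -ft := by ring
  rw [h2]
  exact neg_ft_emod hm hf1 hf2

lemma V_res (hm : 0 < m) (hf1 : 1 ≤ ft) (hf2 : ft ≤ m - 1)
    {w tj κv : ℤ} (hw : w % m = m - ft) (ht : tj % m = κv + ft)
    (hκ0 : 0 ≤ κv) (hκm : κv + ft < m) : (w + tj) % m = κv := by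
  rw [res_add hw ht]
  have h1 : (m - ft + (κv + ft)) = κv + m * 1 := by ring
  rw [h1, Int.add_mul_emod_self_left]
  exact Int.emod_eq_of_lt hκ0 (by omega)

lemma slot_h6 {F Sj Wj C₀ : Set ℤ} (hWj : F + Wj = {x : ℤ | m ∣ x} \ Sj)
    (hSsub : Sj ⊆ C₀) {tj z : ℤ} (hdvd : m ∣ (z - tj)) :
    z - tj ∈ C₀ ∨ ∃ fe ∈ F, z - fe ∈ (· + tj) '' Wj := by
  by_cases hc : z - tj ∈ C₀
  · exact Or.inl hc
  · right
    have hmem : z - tj ∈ F + Wj := by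
      rw [hWj]
      exact ⟨hdvd, fun hS => hc (hSsub hS)⟩
    obtain ⟨fe, hfe, w, hw, heq⟩ := Set.mem_add.1 hmem
    exact ⟨fe, hfe, ⟨w, hw, by dsimp only; omega⟩⟩

lemma slot_h5W {F Sj Wj Pj : Set ℤ} (hWj : F + Wj = {x : ℤ | m ∣ x} \ Sj)
    (hPsub : Pj ⊆ Sj) {tj : ℤ} :
    ∀ fe ∈ F, ∀ w ∈ Wj, ∀ c ∈ Pj, fe + (w + tj) ≠ c + tj := by
  intro fe hfe w hw c hc heq
  have hmem : fe + w ∈ F + Wj := Set.add_mem_add hfe hw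
  rw [hWj] at hmem
  exact hmem.2 (by rw [show fe + w = c by omega]; exact hPsub hc)

lemma dvd_of_res_eq {a b r : ℤ} (ha : a % m = r) (hb : b % m = r) : m ∣ (a - b) := by
  have : (a - b) % m = 0 := by rw [Int.sub_emod, ha, hb, sub_self, Int.zero_emod]
  exact Int.dvd_of_emod_eq_zero this

lemma exists_nat_mul_avoid (hm : 0 < m) {X : Set ℤ} (hX : X.Finite) (lb : ℤ) :
    ∃ k : ℕ, (m * k : ℤ) ∉ X ∧ lb ≤ m * k := by
  obtain ⟨ub, hub⟩ := hX.bddAbove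
  refine ⟨(max ub lb + 1).toNat, fun hmem => ?_, ?_⟩
  · have h1 := hub hmem
    have h2 : ((max ub lb + 1).toNat : ℤ) ≥ max ub lb + 1 := Int.self_le_toNat _
    have h3 : ((max ub lb + 1).toNat : ℤ) ≤ m * ((max ub lb + 1).toNat : ℤ) :=
      le_mul_of_one_le_left (Int.natCast_nonneg _) hm
    have h4 := le_max_left ub lb
    omega
  · have h2 : ((max ub lb + 1).toNat : ℤ) ≥ max ub lb + 1 := Int.self_le_toNat _
    have h3 : ((max ub lb + 1).toNat : ℤ) ≤ m * ((max ub lb + 1).toNat : ℤ) :=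
      le_mul_of_one_le_left (Int.natCast_nonneg _) hm
    have h4 := le_max_right ub lb
    omega

/-- find `c ∈ C₀` (a natural multiple) with `z - c = v` shape: given `m ∣ z - v` and `v ≤ z`. -/
lemma sub_to_nat_mul (hm : 0 < m) {z v : ℤ} (hdvd : m ∣ z - v) (hle : v ≤ z) :
    ∃ k : ℕ, (m * k : ℤ) = z - v := by
  obtain ⟨j, hj⟩ := hdvd
  have hj0 : 0 ≤ j := by nlinarith
  exact ⟨j.toNat, by rw [Int.toNat_of_nonneg hj0]; omega⟩

end Toolkit

section Branches

lemma branchM1 (m ft : ℤ) (hm : 2 ≤ m) (hf1 : 1 ≤ ft) (hf2 : ft ≤ m - 1)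
    (C₀ F : Set ℤ)
    (h0 : ∀ k : ℕ, (m * k : ℤ) ∈ C₀)
    (hC₀r : ∀ c ∈ C₀, c % m = 0)
    (hFfin : F.Finite) (hFne : F.Nonempty) (hFr : ∀ x ∈ F, x % m = ft)
    (n : ℕ) (S Wf : Fin n → Set ℤ)
    (hW : ∀ i, F + Wf i = {x : ℤ | m ∣ x} \ S i)
    (hcover : (⋃ i, S i) = C₀)
    (hbound : ft + 2 * ft * (((n : ℤ) + 1) / ft) + ((n : ℤ) + 1) % ft ≤ m)
    (hub : ∀ i, ∀ b : ℤ, ∃ x ∈ ({x : ℤ | m ∣ x} \ S i), x < b) :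
    ArisesAsMAC (C₀ ∪ F) := by
  classical
  have hm0 : (0:ℤ) < m := by omega
  have hft0 : (0:ℤ) < ft := hf1
  have hposb : ∀ p : ℤ, 0 ≤ p → p < (n : ℤ) + 1 → 0 ≤ bk ft p ∧ bk ft p + ft ≤ m - 1 := by
    intro p h1 h2
    refine ⟨bk_nonneg ft hft0 p h1, ?_⟩
    have := (bk_bound ft ((n : ℤ) + 1) hft0 h1 h2).1
    omega
  have hpgb : (0:ℤ) ≤ (n:ℤ) ∧ (n:ℤ) < (n : ℤ) + 1 := by
    constructor
    · positivity
    · omega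
  have hgb := hposb (n:ℤ) hpgb.1 hpgb.2
  have hgres : (bk ft (n:ℤ) + ft - ft) % m = bk ft (n:ℤ) := by
    have h3 : bk ft (n:ℤ) + ft - ft = bk ft (n:ℤ) := by ring
    rw [h3]; exact Int.emod_eq_of_lt hgb.1 (by omega)
  obtain ⟨GP, hGPr, hg6, hg7n, hgw⟩ := gadget m ft hm0 ⟨by omega, by omega⟩ F hFfin hFne hFr
    (bk ft (n:ℤ)) (bk ft (n:ℤ) + ft) hgres ⟨by omega, by omega⟩
  have hiposb : ∀ i : Fin n, 0 ≤ ((i:ℕ):ℤ) ∧ ((i:ℕ):ℤ) < (n : ℤ) + 1 ∧ ((i:ℕ):ℤ) ≠ (n:ℤ) := by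
    intro i
    have := i.isLt
    refine ⟨by positivity, by omega, by omega⟩
  have hκ0 : ∀ s : Fin n, 0 ≤ bk ft ((s:ℕ):ℤ) :=
    fun s => (hposb _ (hiposb s).1 (hiposb s).2.1).1
  have hκm : ∀ s : Fin n, bk ft ((s:ℕ):ℤ) + ft ≤ m - 1 :=
    fun s => (hposb _ (hiposb s).1 (hiposb s).2.1).2
  have hρmod : ∀ s : Fin n, (bk ft ((s:ℕ):ℤ) + ft) % m = bk ft ((s:ℕ):ℤ) + ft := fun s =>
    Int.emod_eq_of_lt (by have := hκ0 s; omega) (by have := hκm s; omega)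
  have hκmod : ∀ s : Fin n, bk ft ((s:ℕ):ℤ) % m = bk ft ((s:ℕ):ℤ) := fun s =>
    Int.emod_eq_of_lt (hκ0 s) (by have := hκm s; omega)
  have hSsub : ∀ i, S i ⊆ C₀ := fun i => hcover ▸ Set.subset_iUnion S i
  have hfminF : hFfin.toFinset.Nonempty := by rwa [Set.Finite.toFinset_nonempty]
  have hVres : ∀ s : Fin n, ∀ v ∈ (· + (bk ft ((s:ℕ):ℤ) + ft)) '' (Wf s),
      v % m = bk ft ((s:ℕ):ℤ) := by
    intro s v hv
    obtain ⟨w, hw, rfl⟩ := hv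
    have hwres := W_res hm0 hf1 hf2 (hW s) hFne hFr w hw
    exact V_res hm0 hf1 hf2 hwres (hρmod s) (hκ0 s) (by have := hκm s; omega)
  refine ⟨_, master (ι := Fin n) m ft hm0 hft0 (by omega) C₀ F h0 hC₀r hFr
      (fun i => bk ft ((i:ℕ):ℤ) + ft) (fun i => bk ft ((i:ℕ):ℤ))
      (fun i => bk ft ((i:ℕ):ℤ) + ft)
      (fun i => (· + (bk ft ((i:ℕ):ℤ) + ft)) '' (Wf i)) S (fun _ => True)
      (bk ft (n:ℤ)) (bk ft (n:ℤ) + ft) GP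
      (fun s => ⟨by have := hκ0 s; omega, by have := hκm s; omega⟩)
      (fun s _ => by
        have h3 : bk ft ((s:ℕ):ℤ) + ft - ft = bk ft ((s:ℕ):ℤ) := by ring
        rw [h3]; exact hκmod s)
      (fun s s' h => by
        have h2 : bk ft ((s:ℕ):ℤ) = bk ft ((s':ℕ):ℤ) := by omega
        have := bk_inj ft hft0 (hiposb s).1 (hiposb s').1 h2
        exact Fin.ext (by omega))
      (fun s s' _ _ h => by
        have := bk_inj ft hft0 (hiposb s).1 (hiposb s').1 h
        exact Fin.ext (by omega))
      (fun s s' _ => Ne.symm (bk_ne_bkf ft hft0 (hiposb s').1 (hiposb s).1))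
      (fun s => ⟨Ne.symm (bk_ne_bkf ft hft0 hpgb.1 (hiposb s).1), by
        intro h
        have h2 : bk ft ((s:ℕ):ℤ) = bk ft (n:ℤ) := by omega
        have := bk_inj ft hft0 (hiposb s).1 hpgb.1 h2
        exact (hiposb s).2.2 this⟩)
      (fun s _ => ⟨by
          intro h
          have := bk_inj ft hft0 (hiposb s).1 hpgb.1 h
          exact (hiposb s).2.2 this,
        bk_ne_bkf ft hft0 (hiposb s).1 hpgb.1⟩)
      (by omega)
      hgres
      hρmod
      (fun s v hv => ⟨hVres s v hv, trivial⟩)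
      (fun s fe hfe v hv c hc => by
        obtain ⟨w, hw, rfl⟩ := hv
        exact slot_h5W (hW s) (le_refl (S s)) fe hfe w hw c hc)
      (fun s h => absurd trivial h)
      (fun s z hz => slot_h6 (hW s) (hSsub s) (dvd_of_res_eq hz (hρmod s)))
      (fun s _ z hz => by
        obtain ⟨x, hx, hxlt⟩ := hub s (z - (bk ft ((s:ℕ):ℤ) + ft) + hFfin.toFinset.min' hfminF)
        rw [← hW s] at hx
        obtain ⟨fe, hfe, w, hw, hfw⟩ := Set.mem_add.1 hx
        have hfeb : hFfin.toFinset.min' hfminF ≤ fe :=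
          Finset.min'_le _ _ (hFfin.mem_toFinset.2 hfe)
        have hvle : w + (bk ft ((s:ℕ):ℤ) + ft) ≤ z := by omega
        have hvmem : w + (bk ft ((s:ℕ):ℤ) + ft)
            ∈ (· + (bk ft ((s:ℕ):ℤ) + ft)) '' (Wf s) := ⟨w, hw, rfl⟩
        have hvres := hVres s _ hvmem
        obtain ⟨k, hk⟩ := sub_to_nat_mul hm0 (dvd_of_res_eq hz hvres) hvle
        refine ⟨m * k, Or.inl (h0 k), ?_⟩
        have h4 : z - m * k = w + (bk ft ((s:ℕ):ℤ) + ft) := by omega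
        rw [h4]
        exact V_subset_mW m _ _ (fun _ => True) _ _ _ _ GP s hvmem)
      (fun c hc => by
        rw [← hcover] at hc
        exact Set.mem_iUnion.1 hc)
      hGPr hg6
      (fun z hz => by
        obtain ⟨k, hk⟩ := hg7n z hz
        exact ⟨m * k, Or.inl (h0 k),
          GP_subset_mW m _ _ (fun _ => True) _ _ _ _ GP hk⟩)
      hgw⟩

lemma branchM4 (m ft : ℤ) (hm : 2 ≤ m) (hf1 : 1 ≤ ft) (hft2 : 2 ≤ ft) (hm2f : m = 2 * ft)
    (C₀ F : Set ℤ)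
    (h0 : ∀ k : ℕ, (m * k : ℤ) ∈ C₀)
    (hC₀r : ∀ c ∈ C₀, c % m = 0)
    (hC0all : ∀ x : ℤ, m ∣ x → x ∈ C₀)
    (hFfin : F.Finite) (hFne : F.Nonempty) (hFr : ∀ x ∈ F, x % m = ft) :
    ArisesAsMAC (C₀ ∪ F) := by
  classical
  have hm0 : (0:ℤ) < m := by omega
  have hft0 : (0:ℤ) < ft := hf1
  have hf2 : ft ≤ m - 1 := by omega
  have hfminF : hFfin.toFinset.Nonempty := by rwa [Set.Finite.toFinset_nonempty]
  have hfb : ∀ fe ∈ F, hFfin.toFinset.min' hfminF ≤ fe ∧ fe ≤ hFfin.toFinset.max' hfminF :=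
    fun fe hfe => ⟨Finset.min'_le _ _ (hFfin.mem_toFinset.2 hfe),
     Finset.le_max' _ _ (hFfin.mem_toFinset.2 hfe)⟩
  obtain ⟨T, hT1, hT2⟩ : ∃ T : ℤ, 0 ≤ T ∧
      hFfin.toFinset.max' hfminF - hFfin.toFinset.min' hfminF < 2 * (ft + m * T) := by
    refine ⟨(hFfin.toFinset.max' hfminF - hFfin.toFinset.min' hfminF).toNat, Int.natCast_nonneg _, ?_⟩
    have h2 := Int.self_le_toNat (hFfin.toFinset.max' hfminF - hFfin.toFinset.min' hfminF)
    have h3 : ((hFfin.toFinset.max' hfminF - hFfin.toFinset.min' hfminF).toNat : ℤ)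
        ≤ m * ((hFfin.toFinset.max' hfminF - hFfin.toFinset.min' hfminF).toNat : ℤ) :=
      le_mul_of_one_le_left (Int.natCast_nonneg _) hm0
    omega
  set t1 : ℤ := ft + m * T with ht1
  have ht1res : t1 % m = ft := by
    obtain ⟨T', rfl, _⟩ : ∃ T' : ℤ, T' = T ∧ True := ⟨T, rfl, trivial⟩
    rw [ht1, Int.add_mul_emod_self_left]
    exact Int.emod_eq_of_lt (by omega) (by omega)
  have htres : ∀ s : Fin 2, (t1 * ((s:ℕ):ℤ)) % m = ft * ((s:ℕ):ℤ) := by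
    intro s
    fin_cases s
    · norm_num
    · norm_num [ht1res]
  obtain ⟨GP, hGPr, hg6, hg7n, hgw⟩ := gadget m ft hm0 ⟨by omega, by omega⟩ F hFfin hFne hFr
    1 (1 + ft) (by
      have h3 : 1 + ft - ft = (1:ℤ) := by ring
      rw [h3]; exact Int.emod_eq_of_lt (by omega) (by omega))
    ⟨by omega, by omega⟩
  refine ⟨_, master (ι := Fin 2) m ft hm0 hft0 (by omega) C₀ F h0 hC₀r hFr
      (fun s => ft * ((s:ℕ):ℤ)) (fun _ => 0)
      (fun s => t1 * ((s:ℕ):ℤ))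
      (fun _ => ∅)
      (fun s => {c | c ∈ C₀ ∧ ∀ fe ∈ F, c + t1 * ((s:ℕ):ℤ) ≠ fe + t1 * (1 - ((s:ℕ):ℤ))})
      (fun _ => False)
      1 (1 + ft) GP
      (fun s => by fin_cases s <;> constructor <;> norm_num <;> omega)
      (fun s h => h.elim)
      (fun s s' h => by
        fin_cases s <;> fin_cases s' <;> first
          | rfl
          | (exfalso; norm_num at h; omega))
      (fun s s' h => h.elim)
      (fun s s' h => h.elim)
      (fun s => by fin_cases s <;> constructor <;> norm_num <;> omega)
      (fun s h => h.elim)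
      (by omega)
      (by
        have h3 : 1 + ft - ft = (1:ℤ) := by ring
        rw [h3]; exact Int.emod_eq_of_lt (by omega) (by omega))
      htres
      (fun s v hv => hv.elim)
      (fun s fe _ v hv => hv.elim)
      (fun s _ => by
        fin_cases s
        · refine ⟨1, ?_, ?_⟩
          · show ft * (((1:Fin 2):ℕ):ℤ) = (ft * (((0:Fin 2):ℕ):ℤ) - ft) % m
            have h2 : ft * (((0:Fin 2):ℕ):ℤ) - ft = -ft := by norm_num
            rw [h2, neg_ft_emod hm0 hf1 hf2]
            norm_num
            omega
          · intro c hc fe hfe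
            have h3 := hc.2 fe hfe
            simpa using h3
        · refine ⟨0, ?_, ?_⟩
          · show ft * (((0:Fin 2):ℕ):ℤ) = (ft * (((1:Fin 2):ℕ):ℤ) - ft) % m
            norm_num
          · intro c hc fe hfe
            have h3 := hc.2 fe hfe
            simpa using h3)
      (fun s z hz => Or.inl (hC0all _ (dvd_of_res_eq hz (htres s))))
      (fun s h => h.elim)
      (fun c hc => by
        by_cases h1 : ∀ fe ∈ F, c + t1 * ((((0:Fin 2)):ℕ):ℤ) ≠ fe + t1 * (1 - ((((0:Fin 2)):ℕ):ℤ))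
        · exact ⟨0, hc, h1⟩
        · by_cases h2 : ∀ fe ∈ F, c + t1 * ((((1:Fin 2)):ℕ):ℤ) ≠ fe + t1 * (1 - ((((1:Fin 2)):ℕ):ℤ))
          · exact ⟨1, hc, h2⟩
          · exfalso
            push_neg at h1 h2
            obtain ⟨fe, hfe, he1⟩ := h1
            obtain ⟨fe', hfe', he2⟩ := h2
            have hb1 := hfb fe hfe
            have hb2 := hfb fe' hfe'
            norm_num at he1 he2
            omega)
      hGPr hg6
      (fun z hz => by
        obtain ⟨k, hk⟩ := hg7n z hz
        exact ⟨m * k, Or.inl (h0 k),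
          GP_subset_mW m _ _ (fun _ => False) _ _ _ _ GP hk⟩)
      hgw⟩

lemma branchM2 (m ft : ℤ) (hm : 2 ≤ m) (hf1 : 1 ≤ ft) (hf2 : ft ≤ m - 1)
    (C₀ F : Set ℤ)
    (h0 : ∀ k : ℕ, (m * k : ℤ) ∈ C₀)
    (hC₀r : ∀ c ∈ C₀, c % m = 0)
    (hFfin : F.Finite) (hFne : F.Nonempty) (hFr : ∀ x ∈ F, x % m = ft)
    (n : ℕ) (hn : 0 < n) (S Wf : Fin n → Set ℤ)
    (hW : ∀ i, F + Wf i = {x : ℤ | m ∣ x} \ S i)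
    (hcover : (⋃ i, S i) = C₀)
    (hbound : ft + 2 * ft * (((n : ℤ) + 1) / ft) + ((n : ℤ) + 1) % ft ≤ m)
    (hm2f : m ≠ 2 * ft)
    (i₀ : Fin n) (b₀ : ℤ) (hbb : ∀ x ∈ ({x : ℤ | m ∣ x} \ S i₀), b₀ ≤ x) :
    ArisesAsMAC (C₀ ∪ F) := by
  classical
  have hm0 : (0:ℤ) < m := by omega
  have hft0 : (0:ℤ) < ft := hf1
  have hC₀dvd : ∀ c ∈ C₀, m ∣ c := fun c hc => Int.dvd_of_emod_eq_zero (hC₀r c hc)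
  have hposb : ∀ p : ℤ, 0 ≤ p → p < (n : ℤ) + 1 → 0 ≤ bk ft p ∧ bk ft p + ft ≤ m - 1 := by
    intro p h1 h2
    refine ⟨bk_nonneg ft hft0 p h1, ?_⟩
    have := (bk_bound ft ((n : ℤ) + 1) hft0 h1 h2).1
    omega
  obtain ⟨kd, hkd0, hkdd, hkdf, hkdres, hlam⟩ :=
    lambda_exists ft ((n:ℤ)+1) m hft0 (by positivity) hf2 hbound hm2f
  set pg : ℤ := if kd = (n:ℤ) then 0 else (n:ℤ) with hpgdef
  have hpg : (0 ≤ pg ∧ pg < (n:ℤ)+1) ∧ pg ≠ kd := by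
    rw [hpgdef]; split <;> refine ⟨⟨?_, ?_⟩, ?_⟩ <;> omega
  set base : Fin n → ℤ := fun i => if ((i:ℕ):ℤ) < pg then ((i:ℕ):ℤ) else ((i:ℕ):ℤ) + 1
    with hbasedef
  have hbase : ∀ i : Fin n, (0 ≤ base i ∧ base i < (n:ℤ)+1) ∧ base i ≠ pg := by
    intro i
    have hi := i.isLt
    rw [hbasedef]
    dsimp only
    split <;> refine ⟨⟨?_, ?_⟩, ?_⟩ <;> omega
  have hbaseinj : ∀ i j : Fin n, base i = base j → i = j := by
    intro i j h
    rw [hbasedef] at h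
    dsimp only at h
    refine Fin.ext ?_
    split at h <;> split at h <;> omega
  have hiK : ∃ iK : Fin n, base iK = kd := by
    by_cases hc : kd < pg
    · refine ⟨⟨kd.toNat, by omega⟩, ?_⟩
      rw [hbasedef]
      dsimp only
      have h2 : ((kd.toNat : ℕ) : ℤ) = kd := Int.toNat_of_nonneg hkd0
      rw [if_pos (by omega)]
      omega
    · refine ⟨⟨(kd - 1).toNat, by omega⟩, ?_⟩
      rw [hbasedef]
      dsimp only
      have h2 : (((kd - 1).toNat : ℕ) : ℤ) = kd - 1 := Int.toNat_of_nonneg (by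
        have := hpg.1.1
        have := hpg.2
        omega)
      rw [if_neg (by omega)]
      omega
  obtain ⟨iK, hbiK⟩ := hiK
  set σ : Equiv.Perm (Fin n) := Equiv.swap iK i₀ with hσdef
  have hσiK : σ iK = i₀ := Equiv.swap_apply_left _ _
  have hscover : (⋃ i, S (σ i)) = C₀ := by
    rw [← hcover]
    apply Set.Subset.antisymm
    · intro x hx
      obtain ⟨i, hi⟩ := Set.mem_iUnion.1 hx
      exact Set.mem_iUnion.2 ⟨σ i, hi⟩
    · intro x hx
      obtain ⟨j, hj⟩ := Set.mem_iUnion.1 hx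
      exact Set.mem_iUnion.2 ⟨σ.symm j, by simpa using hj⟩
  have hκ0 : ∀ s : Fin n, 0 ≤ bk ft (base s) :=
    fun s => (hposb _ (hbase s).1.1 (hbase s).1.2).1
  have hκm : ∀ s : Fin n, bk ft (base s) + ft ≤ m - 1 :=
    fun s => (hposb _ (hbase s).1.1 (hbase s).1.2).2
  have hρmod : ∀ s : Fin n, (bk ft (base s) + ft) % m = bk ft (base s) + ft := fun s =>
    Int.emod_eq_of_lt (by have := hκ0 s; omega) (by have := hκm s; omega)
  have hκmod : ∀ s : Fin n, bk ft (base s) % m = bk ft (base s) := fun s =>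
    Int.emod_eq_of_lt (hκ0 s) (by have := hκm s; omega)
  have hgb := hposb pg hpg.1.1 hpg.1.2
  have hgres : (bk ft pg + ft - ft) % m = bk ft pg := by
    have h3 : bk ft pg + ft - ft = bk ft pg := by ring
    rw [h3]; exact Int.emod_eq_of_lt hgb.1 (by omega)
  obtain ⟨GP, hGPr, hg6, hg7n, hgw⟩ := gadget m ft hm0 ⟨by omega, by omega⟩ F hFfin hFne hFr
    (bk ft pg) (bk ft pg + ft) hgres ⟨by omega, by omega⟩
  have hfminF : hFfin.toFinset.Nonempty := by rwa [Set.Finite.toFinset_nonempty]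
  have hfb : ∀ fe ∈ F, hFfin.toFinset.min' hfminF ≤ fe ∧ fe ≤ hFfin.toFinset.max' hfminF :=
    fun fe hfe => ⟨Finset.min'_le _ _ (hFfin.mem_toFinset.2 hfe),
     Finset.le_max' _ _ (hFfin.mem_toFinset.2 hfe)⟩
  have hSsub : ∀ i, S i ⊆ C₀ := fun i => hcover ▸ Set.subset_iUnion S i
  -- the V families
  set Lf : Fin n → Set ℤ := fun i => if i = iK then ∅ else
    {v | v % m = bk ft (base i) ∧ v ≤ b₀ + (bk ft (base i) + ft) - hFfin.toFinset.max' hfminF - 1}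
    with hLfdef
  set Vf : Fin n → Set ℤ := fun i =>
    ((· + (bk ft (base i) + ft)) '' (Wf (σ i))) ∪ Lf i with hVfdef
  set Pf : Fin n → Set ℤ := fun i => if i = iK then S i₀ else S (σ i) \ S i₀ with hPfdef
  have hPsub : ∀ s, Pf s ⊆ S (σ s) := by
    intro s
    rw [hPfdef]
    dsimp only
    split
    · rename_i hs
      rw [hs, hσiK]
    · exact Set.diff_subset
  have hPlow : ∀ s, s ≠ iK → ∀ c ∈ Pf s, b₀ ≤ c := by
    intro s hs c hc
    rw [hPfdef] at hc
    simp only [if_neg hs] at hc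
    exact hbb c ⟨hC₀dvd c (hSsub _ hc.1), hc.2⟩
  have hVres : ∀ s : Fin n, ∀ v ∈ Vf s, v % m = bk ft (base s) := by
    intro s v hv
    rcases hv with ⟨w, hw, rfl⟩ | hL
    · have hwres := W_res hm0 hf1 hf2 (hW (σ s)) hFne hFr w hw
      exact V_res hm0 hf1 hf2 hwres (hρmod s) (hκ0 s) (by have := hκm s; omega)
    · rw [hLfdef] at hL
      by_cases hs : s = iK
      · simp only [if_pos hs] at hL
        exact hL.elim
      · simp only [if_neg hs] at hL
        exact hL.1
  refine ⟨_, master (ι := Fin n) m ft hm0 hft0 (by omega) C₀ F h0 hC₀r hFr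
      (fun i => bk ft (base i) + ft) (fun i => bk ft (base i))
      (fun i => bk ft (base i) + ft)
      Vf Pf (fun _ => True)
      (bk ft pg) (bk ft pg + ft) GP
      (fun s => ⟨by have := hκ0 s; omega, by have := hκm s; omega⟩)
      (fun s _ => by
        have h3 : bk ft (base s) + ft - ft = bk ft (base s) := by ring
        rw [h3]; exact hκmod s)
      (fun s s' h => by
        have h2 : bk ft (base s) = bk ft (base s') := by omega
        exact hbaseinj s s' (bk_inj ft hft0 (hbase s).1.1 (hbase s').1.1 h2))
      (fun s s' _ _ h => hbaseinj s s' (bk_inj ft hft0 (hbase s).1.1 (hbase s').1.1 h))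
      (fun s s' _ => Ne.symm (bk_ne_bkf ft hft0 (hbase s').1.1 (hbase s).1.1))
      (fun s => ⟨Ne.symm (bk_ne_bkf ft hft0 hpg.1.1 (hbase s).1.1), by
        intro h
        have h2 : bk ft (base s) = bk ft pg := by omega
        exact (hbase s).2 (bk_inj ft hft0 (hbase s).1.1 hpg.1.1 h2)⟩)
      (fun s _ => ⟨by
          intro h
          exact (hbase s).2 (bk_inj ft hft0 (hbase s).1.1 hpg.1.1 h),
        bk_ne_bkf ft hft0 (hbase s).1.1 hpg.1.1⟩)
      (by omega)
      hgres
      hρmod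
      (fun s v hv => ⟨hVres s v hv, trivial⟩)
      (fun s fe hfe v hv c hc => by
        rcases hv with ⟨w, hw, rfl⟩ | hL
        · exact slot_h5W (hW (σ s)) (hPsub s) fe hfe w hw c hc
        · rw [hLfdef] at hL
          by_cases hs : s = iK
          · simp only [if_pos hs] at hL
            exact hL.elim
          · simp only [if_neg hs] at hL
            have hcb := hPlow s hs c hc
            have hfbb := hfb fe hfe
            have := hL.2
            omega)
      (fun s h => absurd trivial h)
      (fun s z hz => by
        have h6 := slot_h6 (hW (σ s)) (hSsub (σ s)) (dvd_of_res_eq hz (hρmod s))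
        rcases h6 with hc | ⟨fe, hfe, hv⟩
        · exact Or.inl hc
        · exact Or.inr ⟨fe, hfe, Or.inl hv⟩)
      (fun s _ z hz => by
        by_cases hs : s = iK
        · -- lambda assist
          subst hs
          refine ⟨hFfin.toFinset.min' hfminF,
            Or.inr (hFfin.mem_toFinset.1 (Finset.min'_mem _ _)), ?_⟩
          refine Or.inl (Or.inl ?_)
          have hres : (z - hFfin.toFinset.min' hfminF) % m = m - ft + kd := by
            rw [emod_sub_f' (hFr _ (hFfin.mem_toFinset.1 (Finset.min'_mem _ _))), hz, hbiK]
            exact hkdres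
          intro hcon
          rcases hcon with ⟨s', hs'⟩ | ⟨s', _, hs'⟩ | hgκ | hgρ
          · rw [hres] at hs'
            exact (hlam (base s') (hbase s').1.1 (hbase s').1.2).2 hs'
          · rw [hres] at hs'
            exact (hlam (base s') (hbase s').1.1 (hbase s').1.2).1 hs'
          · rw [hres] at hgκ
            exact (hlam pg hpg.1.1 hpg.1.2).1 hgκ
          · rw [hres] at hgρ
            exact (hlam pg hpg.1.1 hpg.1.2).2 hgρ
        · -- low part of the carrier
          set θ : ℤ := b₀ + (bk ft (base s) + ft) - hFfin.toFinset.max' hfminF - 1 with hθdef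
          set K : ℕ := (z - θ).toNat with hKdef
          have hK1 : (K:ℤ) ≥ z - θ := Int.self_le_toNat _
          have hK2 : (K:ℤ) ≤ m * (K:ℤ) := le_mul_of_one_le_left (Int.natCast_nonneg _) hm0
          have hvmem : z - m * K ∈ Lf s := by
            rw [hLfdef]
            simp only [if_neg hs]
            refine ⟨?_, by omega⟩
            rw [emod_sub_zero' (by simp [Int.mul_emod_right])]
            exact hz
          refine ⟨m * K, Or.inl (h0 K), ?_⟩
          exact V_subset_mW m _ _ (fun _ => True) _ Vf _ _ GP s (Or.inr hvmem))
      (fun c hc => by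
        by_cases hc0 : c ∈ S i₀
        · exact ⟨iK, by rw [hPfdef]; simp only [if_pos rfl]; exact hc0⟩
        · rw [← hcover] at hc
          obtain ⟨j, hj⟩ := Set.mem_iUnion.1 hc
          refine ⟨σ.symm j, ?_⟩
          have hne : σ.symm j ≠ iK := by
            intro h
            rw [← hσiK, ← h, Equiv.apply_symm_apply] at hc0
            exact hc0 hj
          rw [hPfdef]
          simp only [if_neg hne]
          exact ⟨by simpa using hj, hc0⟩)
      hGPr hg6
      (fun z hz => by
        obtain ⟨k, hk⟩ := hg7n z hz
        exact ⟨m * k, Or.inl (h0 k),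
          GP_subset_mW m _ _ (fun _ => True) _ Vf _ _ GP hk⟩)
      hgw⟩

lemma branchM3 (m ft : ℤ) (hm : 2 ≤ m) (hf1 : 1 ≤ ft) (hf2 : ft ≤ m - 1)
    (C₀ F : Set ℤ)
    (h0 : ∀ k : ℕ, (m * k : ℤ) ∈ C₀)
    (hC₀r : ∀ c ∈ C₀, c % m = 0)
    (hFfin : F.Finite) (hFne : F.Nonempty) (hFr : ∀ x ∈ F, x % m = ft)
    (n : ℕ) (hn : 0 < n) (S Wf : Fin n → Set ℤ)
    (hW : ∀ i, F + Wf i = {x : ℤ | m ∣ x} \ S i)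
    (hcover : (⋃ i, S i) = C₀)
    (hbound : ft + 2 * ft * (((n : ℤ) + 1) / ft) + ((n : ℤ) + 1) % ft ≤ m)
    (hm2f : m = 2 * ft)
    (i₀ : Fin n) (b₀ : ℤ) (hbb : ∀ x ∈ ({x : ℤ | m ∣ x} \ S i₀), b₀ ≤ x)
    (hWne : ({x : ℤ | m ∣ x} \ S i₀).Nonempty) :
    ArisesAsMAC (C₀ ∪ F) := by
  classical
  have hm0 : (0:ℤ) < m := by omega
  have hft0 : (0:ℤ) < ft := hf1
  have hC₀dvd : ∀ c ∈ C₀, m ∣ c := fun c hc => Int.dvd_of_emod_eq_zero (hC₀r c hc)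
  have hSsub : ∀ i, S i ⊆ C₀ := fun i => hcover ▸ Set.subset_iUnion S i
  -- n + 2 ≤ ft
  have hnft : (n:ℤ) + 2 ≤ ft := by
    have hq0 : 0 ≤ ((n:ℤ)+1) / ft := Int.ediv_nonneg (by positivity) (le_of_lt hft0)
    have hr0 : 0 ≤ ((n:ℤ)+1) % ft := Int.emod_nonneg _ (ne_of_gt hft0)
    have hrft : ((n:ℤ)+1) % ft < ft := Int.emod_lt_of_pos _ hft0
    have hed : ft * (((n:ℤ)+1) / ft) + ((n:ℤ)+1) % ft = (n:ℤ)+1 := Int.mul_ediv_add_emod _ _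
    have hq : ((n:ℤ)+1) / ft = 0 := by
      by_contra hq
      have h1 : 1 ≤ ((n:ℤ)+1) / ft := by omega
      have h2 : 2 * ft * 1 ≤ 2 * ft * (((n:ℤ)+1) / ft) :=
        mul_le_mul_of_nonneg_left h1 (by omega)
      omega
    rw [hq] at hed
    omega
  have hC₀sub : ∀ c ∈ C₀, c ∈ {x : ℤ | m ∣ x} := fun c hc => hC₀dvd c hc
  -- the finite exceptional set G
  set G : Set ℤ := {x : ℤ | m ∣ x} \ C₀ with hGdef
  have hGS : G ⊆ {x : ℤ | m ∣ x} \ S i₀ := fun x hx => ⟨hx.1, fun h => hx.2 (hSsub i₀ h)⟩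
  have hGneg : ∀ x ∈ G, x < 0 := by
    intro x hx
    by_contra hge
    obtain ⟨k, hk⟩ := hx.1
    have hk0 : 0 ≤ k := by nlinarith [hx.1]
    exact hx.2 (by rw [hk, show k = ((k.toNat : ℕ) : ℤ) by omega]; exact h0 k.toNat)
  have hGfin : G.Finite := by
    refine Set.Finite.subset (Set.finite_Ico b₀ 0) ?_
    intro x hx
    exact ⟨hbb x (hGS hx), hGneg x hx⟩
  -- mini and jstar parameters
  have hfminF : hFfin.toFinset.Nonempty := by rwa [Set.Finite.toFinset_nonempty]
  have hfb : ∀ fe ∈ F, hFfin.toFinset.min' hfminF ≤ fe ∧ fe ≤ hFfin.toFinset.max' hfminF :=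
    fun fe hfe => ⟨Finset.min'_le _ _ (hFfin.mem_toFinset.2 hfe),
     Finset.le_max' _ _ (hFfin.mem_toFinset.2 hfe)⟩
  obtain ⟨fe₀, hfe₀⟩ := id hFne
  set tJ : ℤ := ((i₀:ℕ):ℤ) + ft with htJdef
  set tD : ℤ := (n:ℤ) + ft with htDdef
  obtain ⟨x₁, hx₁⟩ := hWne
  rw [← hW i₀] at hx₁
  obtain ⟨fe₁, hfe₁, w₁, hw₁, hfw₁⟩ := Set.mem_add.1 hx₁
  have hWres : ∀ w ∈ Wf i₀, w % m = m - ft := W_res hm0 hf1 hf2 (hW i₀) hFne hFr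
  have hi₀b : 0 ≤ ((i₀:ℕ):ℤ) ∧ ((i₀:ℕ):ℤ) + ft ≤ m - 1 := by
    have := i₀.isLt
    constructor
    · positivity
    · omega
  have htJres : tJ % m = ((i₀:ℕ):ℤ) + ft :=
    Int.emod_eq_of_lt (by omega) (by omega)
  have htDres : tD % m = (n:ℤ) + ft :=
    Int.emod_eq_of_lt (by omega) (by omega)
  -- leftover set
  set LF : Set ℤ := {z : ℤ | z % m = ((i₀:ℕ):ℤ) ∧ ∀ w ∈ Wf i₀, z - (w + tJ) ∉ C₀}
    with hLFdef
  have hLFfin : LF.Finite := by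
    refine Set.Finite.subset (hGfin.image (· + (w₁ + tJ))) ?_
    intro z hz
    refine ⟨z - (w₁ + tJ), ⟨?_, hz.2 w₁ hw₁⟩, by ring⟩
    refine Int.dvd_of_emod_eq_zero ?_
    have hv1 : (w₁ + tJ) % m = ((i₀:ℕ):ℤ) :=
      V_res hm0 hf1 hf2 (hWres w₁ hw₁) htJres hi₀b.1 (by omega)
    rw [Int.sub_emod, hz.1, hv1, sub_self, Int.zero_emod]
  -- choice of c_z
  have hczex : ∀ z : ℤ, ∃ c : ℤ, c ∈ C₀ ∧
      ∀ fe ∈ F, ∀ fe' ∈ F, ∀ fe'' ∈ F, ∀ g ∈ G, fe + z - tJ - c ≠ fe'' - fe' + g := by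
    intro z
    have hXfin : Set.Finite {c : ℤ | ∃ fe ∈ F, ∃ fe' ∈ F, ∃ fe'' ∈ F, ∃ g ∈ G,
        c = fe + z - tJ - fe'' + fe' - g} := by
      have h1 : {c : ℤ | ∃ fe ∈ F, ∃ fe' ∈ F, ∃ fe'' ∈ F, ∃ g ∈ G,
          c = fe + z - tJ - fe'' + fe' - g} ⊆
          (fun p : (ℤ × ℤ) × (ℤ × ℤ) => p.1.1 + z - tJ - p.2.1 + p.1.2 - p.2.2) ''
            ((F ×ˢ F) ×ˢ (F ×ˢ G)) := by
        rintro c ⟨fe, hfe, fe', hfe', fe'', hfe'', g, hg, rfl⟩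
        exact ⟨((fe, fe'), (fe'', g)), ⟨⟨hfe, hfe'⟩, hfe'', hg⟩, rfl⟩
      exact Set.Finite.subset (Set.Finite.image _
        (((hFfin.prod hFfin)).prod (hFfin.prod hGfin))) h1
    obtain ⟨k, hk1, _⟩ := exists_nat_mul_avoid hm0 hXfin 0
    refine ⟨m * k, h0 k, ?_⟩
    intro fe hfe fe' hfe' fe'' hfe'' g hg heq
    exact hk1 ⟨fe, hfe, fe', hfe', fe'', hfe'', g, hg, by omega⟩
  set cz : ℤ → ℤ := fun z => (hczex z).choose with hczdef
  have hczC : ∀ z, cz z ∈ C₀ := fun z => (hczex z).choose_spec.1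
  have hczP : ∀ z, ∀ fe ∈ F, ∀ fe' ∈ F, ∀ fe'' ∈ F, ∀ g ∈ G,
      fe + z - tJ - cz z ≠ fe'' - fe' + g := fun z => (hczex z).choose_spec.2
  set Uset : Set ℤ := {v | ∃ z ∈ LF, v = z - cz z} with hUdef
  set D : Set ℤ := {dd | dd ∈ C₀ ∧ ∃ z ∈ LF, ∃ fe ∈ F, dd = fe + (z - cz z) - tJ} with hDdef
  have hDfin : D.Finite := by
    refine Set.Finite.subset (Set.Finite.image
      (fun p : ℤ × ℤ => p.2 + (p.1 - cz p.1) - tJ) (hLFfin.prod hFfin)) ?_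
    rintro dd ⟨_, z, hz, fe, hfe, rfl⟩
    exact ⟨(z, fe), ⟨hz, hfe⟩, rfl⟩
  -- choice of c'_z
  have hczex' : ∀ z : ℤ, ∃ c : ℤ, c ∈ C₀ ∧
      ∀ fe ∈ F, ∀ dd ∈ D, fe + (z - c) ≠ dd + tD := by
    intro z
    have hXfin : Set.Finite {c : ℤ | ∃ fe ∈ F, ∃ dd ∈ D, c = fe + z - dd - tD} := by
      have h1 : {c : ℤ | ∃ fe ∈ F, ∃ dd ∈ D, c = fe + z - dd - tD} ⊆
          (fun p : ℤ × ℤ => p.1 + z - p.2 - tD) '' (F ×ˢ D) := by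
        rintro c ⟨fe, hfe, dd, hdd, rfl⟩
        exact ⟨(fe, dd), ⟨hfe, hdd⟩, rfl⟩
      exact Set.Finite.subset (Set.Finite.image _ (hFfin.prod hDfin)) h1
    obtain ⟨k, hk1, _⟩ := exists_nat_mul_avoid hm0 hXfin 0
    refine ⟨m * k, h0 k, ?_⟩
    intro fe hfe dd hdd heq
    exact hk1 ⟨fe, hfe, dd, hdd, by omega⟩
  set cz' : ℤ → ℤ := fun z => (hczex' z).choose with hcz'def
  have hczC' : ∀ z, cz' z ∈ C₀ := fun z => (hczex' z).choose_spec.1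
  have hczP' : ∀ z, ∀ fe ∈ F, ∀ dd ∈ D, fe + (z - cz' z) ≠ dd + tD :=
    fun z => (hczex' z).choose_spec.2
  set XD : Set ℤ := {v | ∃ g ∈ G, v = g + tD - fe₀} with hXDdef
  set U'set : Set ℤ := {v | ∃ z', z' % m = (n:ℤ) ∧ (∀ x ∈ XD, z' - x ∉ C₀) ∧ v = z' - cz' z'}
    with hU'def
  have hXDres : ∀ v ∈ XD, v % m = (n:ℤ) := by
    rintro v ⟨g, hg, rfl⟩
    have h1 : (g + tD) % m = (n:ℤ) + ft := by
      rw [Int.add_emod, Int.emod_eq_zero_of_dvd hg.1, zero_add,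
        Int.emod_emod_of_dvd _ dvd_rfl, htDres]
    rw [emod_sub_f' (hFr fe₀ hfe₀), h1]
    have h2 : (n:ℤ) + ft - ft = (n:ℤ) := by ring
    rw [h2]
    exact Int.emod_eq_of_lt (by positivity) (by omega)
  have hUres : ∀ v ∈ Uset, v % m = ((i₀:ℕ):ℤ) := by
    rintro v ⟨z, hz, rfl⟩
    rw [emod_sub_zero' (hC₀r _ (hczC z))]
    exact hz.1
  have hU'res : ∀ v ∈ U'set, v % m = (n:ℤ) := by
    rintro v ⟨z, hz1, hz2, rfl⟩
    rw [emod_sub_zero' (hC₀r _ (hczC' z))]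
    exact hz1
  have hii : (i₀:ℕ) < n := i₀.isLt
  have hjb : ∀ j : Fin (n+1), 0 ≤ ((j:ℕ):ℤ) ∧ ((j:ℕ):ℤ) ≤ (n:ℤ) := by
    intro j
    have := j.isLt
    constructor
    · positivity
    · omega
  set EX : Fin (n+1) → Set ℤ := fun j =>
    if (j:ℕ) = n then XD ∪ U'set
    else if (j:ℕ) = (i₀:ℕ) then Uset
    else {v | v % m = ((j:ℕ):ℤ) ∧
      v ≤ b₀ + (((j:ℕ):ℤ) + ft) - hFfin.toFinset.max' hfminF - 1} with hEXdef
  set WW : Fin (n+1) → Set ℤ := fun j => if h : (j:ℕ) < n then Wf ⟨(j:ℕ), h⟩ else ∅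
    with hWWdef
  set SD : Fin (n+1) → Set ℤ := fun j => if h : (j:ℕ) < n then S ⟨(j:ℕ), h⟩ else ∅
    with hSDdef
  set Pv : Fin (n+1) → Set ℤ := fun j =>
    if (j:ℕ) = n then D else if (j:ℕ) = (i₀:ℕ) then S i₀ \ D else SD j \ S i₀ with hPvdef
  have hWWlt : ∀ (j : Fin (n+1)) (h : (j:ℕ) < n), WW j = Wf ⟨(j:ℕ), h⟩ := by
    intro j h; rw [hWWdef]; exact dif_pos h
  have hWWi₀ : ∀ j : Fin (n+1), (j:ℕ) = (i₀:ℕ) → WW j = Wf i₀ := by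
    intro j hj
    have hjlt : (j:ℕ) < n := by omega
    rw [hWWlt j hjlt]
    have h9 : (⟨(j:ℕ), hjlt⟩ : Fin n) = i₀ := Fin.ext hj
    rw [h9]
  have hWWn : ∀ j : Fin (n+1), (j:ℕ) = n → WW j = ∅ := by
    intro j hj; rw [hWWdef]; exact dif_neg (by omega)
  have hSDlt : ∀ (j : Fin (n+1)) (h : (j:ℕ) < n), SD j = S ⟨(j:ℕ), h⟩ := by
    intro j h; rw [hSDdef]; exact dif_pos h
  have hWWres : ∀ j : Fin (n+1), ∀ w ∈ WW j, w % m = m - ft := by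
    intro j w hw
    by_cases h : (j:ℕ) < n
    · rw [hWWlt j h] at hw
      exact W_res hm0 hf1 hf2 (hW _) hFne hFr w hw
    · rw [hWWn j (by omega)] at hw
      exact hw.elim
  have hWWex : ∀ (j : Fin (n+1)) (h : (j:ℕ) < n), F + WW j = {x : ℤ | m ∣ x} \ SD j := by
    intro j h
    rw [hWWlt j h, hSDlt j h]
    exact hW _
  have htv : ∀ j : Fin (n+1), (((j:ℕ):ℤ) + ft) % m = ((j:ℕ):ℤ) + ft := by
    intro j
    have := (hjb j).1
    have := (hjb j).2
    exact Int.emod_eq_of_lt (by omega) (by omega)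
  have hκv : ∀ j : Fin (n+1), ((j:ℕ):ℤ) % m = ((j:ℕ):ℤ) := by
    intro j
    have := (hjb j).1
    have := (hjb j).2
    exact Int.emod_eq_of_lt (by omega) (by omega)
  have hVres : ∀ j : Fin (n+1),
      ∀ v ∈ ((· + (((j:ℕ):ℤ) + ft)) '' (WW j)) ∪ EX j, v % m = ((j:ℕ):ℤ) := by
    intro j v hv
    rcases hv with ⟨w, hw, rfl⟩ | hex
    · exact V_res hm0 hf1 hf2 (hWWres j w hw) (htv j) (hjb j).1
        (by have := (hjb j).2; omega)
    · rw [hEXdef] at hex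
      by_cases hj : (j:ℕ) = n
      · simp only [if_pos hj] at hex
        have hjz : ((j:ℕ):ℤ) = (n:ℤ) := by rw [hj]
        rw [hjz]
        rcases hex with hx | hx
        · exact hXDres v hx
        · exact hU'res v hx
      · simp only [if_neg hj] at hex
        by_cases hji : (j:ℕ) = (i₀:ℕ)
        · simp only [if_pos hji] at hex
          have hjz : ((j:ℕ):ℤ) = ((i₀:ℕ):ℤ) := by rw [hji]
          rw [hjz]
          exact hUres v hex
        · simp only [if_neg hji] at hex
          exact hex.1
  -- safety
  have hsafe : ∀ j : Fin (n+1), ∀ fe ∈ F,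
      ∀ v ∈ ((· + (((j:ℕ):ℤ) + ft)) '' (WW j)) ∪ EX j,
      ∀ c ∈ Pv j, fe + v ≠ c + (((j:ℕ):ℤ) + ft) := by
    intro j fe hfe v hv c hc
    rw [hPvdef] at hc
    by_cases hj : (j:ℕ) = n
    · simp only [if_pos hj] at hc
      rcases hv with ⟨w, hw, rfl⟩ | hex
      · rw [hWWn j hj] at hw
        exact hw.elim
      · rw [hEXdef] at hex
        simp only [if_pos hj] at hex
        have hjz : ((j:ℕ):ℤ) = (n:ℤ) := by rw [hj]
        rw [hjz, ← htDdef]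
        rcases hex with ⟨g, hg, rfl⟩ | ⟨z', hz1, hz2, rfl⟩
        · intro heq
          obtain ⟨hcC, z, hzLF, fe', hfe', hdd⟩ := hc
          exact hczP z fe' hfe' fe₀ hfe₀ fe hfe g hg (by omega)
        · exact hczP' z' fe hfe c hc
    · simp only [if_neg hj] at hc
      by_cases hji : (j:ℕ) = (i₀:ℕ)
      · simp only [if_pos hji] at hc
        have hjz : ((j:ℕ):ℤ) = ((i₀:ℕ):ℤ) := by rw [hji]
        rcases hv with ⟨w, hw, rfl⟩ | hex
        · rw [hWWi₀ j hji] at hw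
          dsimp only
          rw [hjz, ← htJdef]
          exact slot_h5W (tj := tJ) (hW i₀) Set.diff_subset fe hfe w hw c hc
        · rw [hEXdef] at hex
          simp only [if_neg hj, if_pos hji] at hex
          obtain ⟨z, hzLF, rfl⟩ := hex
          rw [hjz, ← htJdef]
          intro heq
          refine hc.2 ⟨hSsub i₀ hc.1, z, hzLF, fe, hfe, by omega⟩
      · simp only [if_neg hji] at hc
        rcases hv with ⟨w, hw, rfl⟩ | hex
        · have hjlt : (j:ℕ) < n := by
            have := j.isLt; omega
          rw [hWWlt j hjlt] at hw
          rw [hSDlt j hjlt] at hc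
          exact slot_h5W (hW _) Set.diff_subset fe hfe w hw c hc
        · rw [hEXdef] at hex
          simp only [if_neg hj, if_neg hji] at hex
          have hcb : b₀ ≤ c := by
            refine hbb c ⟨?_, hc.2⟩
            have hjlt : (j:ℕ) < n := by have := j.isLt; omega
            rw [hSDlt j hjlt] at hc
            exact hC₀dvd c (hSsub _ hc.1)
          have hfbb := hfb fe hfe
          have := hex.2
          omega
  -- gadget
  obtain ⟨GP, hGPr, hg6, hg7n, hgw⟩ := gadget m ft hm0 ⟨by omega, by omega⟩ F hFfin hFne hFr
    ((n:ℤ)+1) ((n:ℤ)+1+ft) (by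
      have h3 : (n:ℤ)+1+ft - ft = (n:ℤ)+1 := by ring
      rw [h3]; exact Int.emod_eq_of_lt (by positivity) (by omega))
    ⟨by positivity, by omega⟩
  refine ⟨_, master (ι := Fin (n+1)) m ft hm0 hft0 (by omega) C₀ F h0 hC₀r hFr
      (fun j => ((j:ℕ):ℤ) + ft) (fun j => ((j:ℕ):ℤ))
      (fun j => ((j:ℕ):ℤ) + ft)
      (fun j => ((· + (((j:ℕ):ℤ) + ft)) '' (WW j)) ∪ EX j)
      Pv (fun _ => True)
      ((n:ℤ)+1) ((n:ℤ)+1+ft) GP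
      (fun j => ⟨by have := (hjb j).1; omega,
        by have := (hjb j).2; omega⟩)
      (fun j _ => by
        have h3 : ((j:ℕ):ℤ) + ft - ft = ((j:ℕ):ℤ) := by ring
        rw [h3]; exact hκv j)
      (fun j j' h => by
        beta_reduce at h
        exact Fin.ext (by omega))
      (fun j j' _ _ h => by
        beta_reduce at h
        exact Fin.ext (by omega))
      (fun j j' _ => by
        beta_reduce
        have h1 := (hjb j).1
        have h2 := (hjb j').2
        omega)
      (fun j => by
        constructor
        · beta_reduce; have h1 := (hjb j).1; omega
        · beta_reduce; have h1 := (hjb j).2; omega)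
      (fun j _ => by
        constructor
        · beta_reduce; have h1 := (hjb j).2; omega
        · beta_reduce; have h1 := (hjb j).1; have h2 := (hjb j).2; omega)
      (by omega)
      (by
        have h3 : (n:ℤ)+1+ft - ft = (n:ℤ)+1 := by ring
        rw [h3]; exact Int.emod_eq_of_lt (by positivity) (by omega))
      htv
      (fun j v hv => ⟨hVres j v hv, trivial⟩)
      hsafe
      (fun j h => absurd trivial h)
      (fun j z hz => by
        by_cases hj : (j:ℕ) = n
        · by_cases hc : z - (((j:ℕ):ℤ) + ft) ∈ C₀
          · exact Or.inl hc
          · refine Or.inr ⟨fe₀, hfe₀, Or.inr ?_⟩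
            have hjz : ((j:ℕ):ℤ) = (n:ℤ) := by rw [hj]
            have hgmem : z - (((j:ℕ):ℤ) + ft) ∈ G :=
              ⟨dvd_of_res_eq hz (htv j), hc⟩
            rw [hEXdef]
            dsimp only
            rw [if_pos hj]
            refine Or.inl ⟨z - (((j:ℕ):ℤ) + ft), hgmem, ?_⟩
            rw [htDdef]
            omega
        · have hjlt : (j:ℕ) < n := by have := j.isLt; omega
          have hSDsub : SD j ⊆ C₀ := by
            rw [hSDlt j hjlt]; exact hSsub _
          have h6 := slot_h6 (hWWex j hjlt) hSDsub (dvd_of_res_eq hz (htv j))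
          rcases h6 with hc | ⟨fe, hfe, hv⟩
          · exact Or.inl hc
          · exact Or.inr ⟨fe, hfe, Or.inl hv⟩)
      (fun j _ z hz => by
        by_cases hj : (j:ℕ) = n
        · have hjz : ((j:ℕ):ℤ) = (n:ℤ) := by rw [hj]
          by_cases hx : ∃ x ∈ XD, z - x ∈ C₀
          · obtain ⟨x, hxX, hxc⟩ := hx
            refine ⟨z - x, Or.inl hxc, ?_⟩
            have h4 : z - (z - x) = x := by ring
            rw [h4]
            refine V_subset_mW m _ _ (fun _ => True) _ _ _ _ GP j (Or.inr ?_)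
            rw [hEXdef]; dsimp only; rw [if_pos hj]
            exact Or.inl hxX
          · push_neg at hx
            refine ⟨cz' z, Or.inl (hczC' z), ?_⟩
            refine V_subset_mW m _ _ (fun _ => True) _ _ _ _ GP j (Or.inr ?_)
            rw [hEXdef]; dsimp only; rw [if_pos hj]
            exact Or.inr ⟨z, by rw [← hjz]; exact hz, hx, rfl⟩
        · by_cases hji : (j:ℕ) = (i₀:ℕ)
          · have hjz : ((j:ℕ):ℤ) = ((i₀:ℕ):ℤ) := by rw [hji]
            by_cases hx : ∃ w ∈ Wf i₀, z - (w + tJ) ∈ C₀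
            · obtain ⟨w, hwW, hwc⟩ := hx
              refine ⟨z - (w + tJ), Or.inl hwc, ?_⟩
              have h4 : z - (z - (w + tJ)) = w + tJ := by ring
              rw [h4]
              refine V_subset_mW m _ _ (fun _ => True) _ _ _ _ GP j (Or.inl ?_)
              refine ⟨w, by rw [hWWi₀ j hji]; exact hwW, ?_⟩
              dsimp only
              rw [hjz, ← htJdef]
            · push_neg at hx
              have hzLF : z ∈ LF := ⟨by rw [← hjz]; exact hz, hx⟩
              refine ⟨cz z, Or.inl (hczC z), ?_⟩
              refine V_subset_mW m _ _ (fun _ => True) _ _ _ _ GP j (Or.inr ?_)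
              rw [hEXdef]; dsimp only; rw [if_neg hj, if_pos hji]
              exact ⟨z, hzLF, rfl⟩
          · set θ : ℤ := b₀ + (((j:ℕ):ℤ) + ft) - hFfin.toFinset.max' hfminF - 1 with hθdef
            set K : ℕ := (z - θ).toNat with hKdef
            have hK1 : (K:ℤ) ≥ z - θ := Int.self_le_toNat _
            have hK2 : (K:ℤ) ≤ m * (K:ℤ) := le_mul_of_one_le_left (Int.natCast_nonneg _) hm0
            refine ⟨m * K, Or.inl (h0 K), ?_⟩
            refine V_subset_mW m _ _ (fun _ => True) _ _ _ _ GP j (Or.inr ?_)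
            rw [hEXdef]; dsimp only; rw [if_neg hj, if_neg hji]
            refine ⟨?_, by omega⟩
            rw [emod_sub_zero' (by simp [Int.mul_emod_right])]
            exact hz)
      (fun c hc => by
        by_cases hD : c ∈ D
        · refine ⟨⟨n, by omega⟩, ?_⟩
          rw [hPvdef]
          dsimp only
          rw [if_pos rfl]
          exact hD
        · by_cases hS0 : c ∈ S i₀
          · refine ⟨⟨(i₀:ℕ), by omega⟩, ?_⟩
            rw [hPvdef]
            dsimp only
            rw [if_neg (by omega), if_pos rfl]
            exact ⟨hS0, hD⟩
          · rw [← hcover] at hc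
            obtain ⟨jj, hjj⟩ := Set.mem_iUnion.1 hc
            have hjjne : (jj:ℕ) ≠ (i₀:ℕ) := by
              intro h
              have hje : jj = i₀ := Fin.ext h
              rw [hje] at hjj
              exact hS0 hjj
            refine ⟨⟨(jj:ℕ), by have := jj.isLt; omega⟩, ?_⟩
            rw [hPvdef]
            dsimp only
            rw [if_neg (by have := jj.isLt; omega), if_neg (by simpa using hjjne)]
            refine ⟨?_, hS0⟩
            rw [hSDlt _ (by simpa using jj.isLt)]
            have h9 : (⟨((⟨(jj:ℕ), by have := jj.isLt; omega⟩ : Fin (n+1)):ℕ), by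
                simpa using jj.isLt⟩ : Fin n) = jj := Fin.ext rfl
            rw [h9]
            exact hjj)
      hGPr hg6
      (fun z hz => by
        obtain ⟨k, hk⟩ := hg7n z hz
        exact ⟨m * k, Or.inl (h0 k),
          GP_subset_mW m _ _ (fun _ => True) _ _ _ _ GP hk⟩)
      hgw⟩

end Branches


end MacAux

theorem set_cover_bound_infinite_B_implies_MAC
    (m : ℤ) (hm : 2 ≤ m)
    (B : Set ℤ) (hBinf : B.Infinite) (hBdvd : ∀ b ∈ B, m ∣ b)
    (ft : ℤ) (hf₁ : 1 ≤ ft) (hf₂ : ft ≤ m - 1)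
    (F : Set ℤ) (hFfin : F.Finite) (hFne : F.Nonempty)
    (hFcong : ∀ f ∈ F, m ∣ f - ft)
    (n : ℕ) (S : Fin n → Set ℤ)
    (hScover : (⋃ i, S i) = {x : ℤ | ∃ k : ℕ, x = m * k} ∪ B)
    (hScov : ∀ i, ∃ W : Set ℤ, F + W = {x : ℤ | m ∣ x} \ S i)
    (hbound : ft + 2 * ft * (((n : ℤ) + 1) / ft) + ((n : ℤ) + 1) % ft ≤ m) :
    ArisesAsMAC ({x : ℤ | ∃ k : ℕ, x = m * k} ∪ B ∪ F) := by
  classical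
  have hm0 : (0:ℤ) < m := by omega
  have hft0 : (0:ℤ) < ft := hf₁
  set C₀ : Set ℤ := {x : ℤ | ∃ k : ℕ, x = m * k} ∪ B with hC₀def
  have h0 : ∀ k : ℕ, (m * k : ℤ) ∈ C₀ := fun k => Or.inl ⟨k, rfl⟩
  have hC₀r : ∀ c ∈ C₀, c % m = 0 := by
    rintro c (⟨k, rfl⟩ | hB)
    · exact Int.mul_emod_right m k
    · exact Int.emod_eq_zero_of_dvd (hBdvd c hB)
  have hFr : ∀ x ∈ F, x % m = ft := by
    intro x hx
    have h1 : ft ≡ x [ZMOD m] := Int.modEq_iff_dvd.2 (hFcong x hx)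
    have h2 : x % m = ft % m := h1.symm
    rw [h2]
    exact Int.emod_eq_of_lt (by omega) (by omega)
  choose Wfam hWfam using hScov
  have hcover : (⋃ i, S i) = C₀ := hScover
  have hn : 0 < n := by
    have h1 : (0:ℤ) ∈ C₀ := by
      have := h0 0
      simpa using this
    rw [← hcover] at h1
    obtain ⟨i, _⟩ := Set.mem_iUnion.1 h1
    exact i.pos
  by_cases hub : ∀ i, ∀ b : ℤ, ∃ x ∈ ({x : ℤ | m ∣ x} \ S i), x < b
  · exact MacAux.branchM1 m ft hm hf₁ hf₂ C₀ F h0 hC₀r hFfin hFne hFr n S Wfam hWfam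
      hcover hbound hub
  · push_neg at hub
    obtain ⟨i₀, b₀, hbb⟩ := hub
    have hbb' : ∀ x ∈ ({x : ℤ | m ∣ x} \ S i₀), b₀ ≤ x := hbb
    by_cases hm2f : m = 2 * ft
    · by_cases hWne : ({x : ℤ | m ∣ x} \ S i₀).Nonempty
      · exact MacAux.branchM3 m ft hm hf₁ hf₂ C₀ F h0 hC₀r hFfin hFne hFr n hn S Wfam
          hWfam hcover hbound hm2f i₀ b₀ hbb' hWne
      · have hC0all : ∀ x : ℤ, m ∣ x → x ∈ C₀ := by
          intro x hx
          have hSsub : S i₀ ⊆ C₀ := hcover ▸ Set.subset_iUnion S i₀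
          by_cases hxS : x ∈ S i₀
          · exact hSsub hxS
          · exact absurd ⟨x, hx, hxS⟩ hWne
        have hft2 : 2 ≤ ft := by
          have hq0 : 0 ≤ ((n:ℤ)+1) / ft := Int.ediv_nonneg (by positivity) (le_of_lt hft0)
          have hr0 : 0 ≤ ((n:ℤ)+1) % ft := Int.emod_nonneg _ (ne_of_gt hft0)
          have hrft : ((n:ℤ)+1) % ft < ft := Int.emod_lt_of_pos _ hft0
          have hed : ft * (((n:ℤ)+1) / ft) + ((n:ℤ)+1) % ft = (n:ℤ)+1 :=
            Int.mul_ediv_add_emod _ _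
          have hq : ((n:ℤ)+1) / ft = 0 := by
            by_contra hq
            have h1 : 1 ≤ ((n:ℤ)+1) / ft := by omega
            have h2 : 2 * ft * 1 ≤ 2 * ft * (((n:ℤ)+1) / ft) :=
              mul_le_mul_of_nonneg_left h1 (by omega)
            omega
          rw [hq] at hed
          omega
        exact MacAux.branchM4 m ft hm hf₁ hft2 hm2f C₀ F h0 hC₀r hC0all hFfin hFne hFr
    · exact MacAux.branchM2 m ft hm hf₁ hf₂ C₀ F h0 hC₀r hFfin hFne hFr n hn S Wfam
        hWfam hcover hbound hm2f i₀ b₀ hbb'
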